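/- Let f ∈ 1 + xF_p[[x]] be an endomorphism of the 1-units that is not a rational function of x, and suppose f is not a p-th power in F_p[[x]]. Then the linear coefficient a_1 of f is nonzero, and g defined by f(1+x) = (1+x)^{a_1} g(1+x) is an endomorphism of the 1-units whose linear coefficient is zero, hence g is a p-th power of an endomorphism. -/

import Mathlib

open PowerSeries

/-- Coefficientwise substitution of a power series `x` with zero constant term into `f`. -/
noncomputable def applySeries {R : Type*} [CommRing R] (f x : PowerSeries R) : PowerSeries R :=
  PowerSeries.mk fun k => ∑ n ∈ Finset.range (k + 1), coeff (R := R) n f * coeff (R := R) k (x ^ n)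

/-- `f ∈ 1 + x R[[x]]` defines an endomorphism of the group of 1-units. -/
def IsOneUnitEndo {R : Type*} [CommRing R] (f : PowerSeries R) : Prop :=
  constantCoeff (R := R) f = 1 ∧
    ∀ u v : PowerSeries R, constantCoeff (R := R) u = 1 → constantCoeff (R := R) v = 1 →
      applySeries f (u * v - 1) = applySeries f (u - 1) * applySeries f (v - 1)

/-- A power series is rational if it equals `P/Q` for polynomials `P, Q`. -/
def IsRationalPS {R : Type*} [CommRing R] (f : PowerSeries R) : Prop :=
  ∃ P Q : Polynomial R, Q ≠ 0 ∧ (Q : PowerSeries R) * f = (P : PowerSeries R)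

namespace OneUnitAux

open Finset

variable {R : Type*} [CommRing R]

lemma coeff_applySeries (f s : PowerSeries R) (k : ℕ) :
    coeff (R := R) k (applySeries f s) = ∑ n ∈ Finset.range (k + 1), coeff (R := R) n f * coeff (R := R) k (s ^ n) :=
  coeff_mk _ _

lemma coeff_pow_of_lt {s : PowerSeries R} (hs : constantCoeff (R := R) s = 0) {k n : ℕ} (h : k < n) :
    coeff (R := R) k (s ^ n) = 0 := by
  have hdvd : (X : PowerSeries R) ^ n ∣ s ^ n :=
    pow_dvd_pow_of_dvd (PowerSeries.X_dvd_iff.mpr hs) n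
  exact (PowerSeries.X_pow_dvd_iff.mp hdvd) k h

lemma coeff_applySeries_ext (f : PowerSeries R) {s : PowerSeries R}
    (hs : constantCoeff (R := R) s = 0) {k N : ℕ} (hN : k < N) :
    coeff (R := R) k (applySeries f s) = ∑ n ∈ Finset.range N, coeff (R := R) n f * coeff (R := R) k (s ^ n) := by
  rw [coeff_applySeries]
  apply Finset.sum_subset (Finset.range_subset_range.2 hN)
  intro x hx hx'
  simp only [Finset.mem_range] at hx hx'
  rw [coeff_pow_of_lt hs (by omega), mul_zero]

lemma applySeries_one (s : PowerSeries R) : applySeries 1 s = 1 := by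
  ext k
  rw [coeff_applySeries]
  simp [PowerSeries.coeff_one]

lemma applySeries_X_right (f : PowerSeries R) : applySeries f X = f := by
  ext k
  rw [coeff_applySeries]
  simp [PowerSeries.coeff_X_pow]

lemma applySeries_X_left {s : PowerSeries R} (hs : constantCoeff (R := R) s = 0) :
    applySeries X s = s := by
  ext k
  rw [coeff_applySeries]
  rcases Nat.eq_zero_or_pos k with rfl | hk
  · rw [Finset.sum_range_one]
    simp [PowerSeries.coeff_zero_eq_constantCoeff, hs]
  · have h1 : (1 : ℕ) ∈ Finset.range (k + 1) := by simp only [Finset.mem_range]; omega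
    rw [Finset.sum_eq_single 1]
    · simp
    · intro b _ hb
      rw [PowerSeries.coeff_X, if_neg hb, zero_mul]
    · intro h; exact absurd h1 h

lemma applySeries_add (f g s : PowerSeries R) :
    applySeries (f + g) s = applySeries f s + applySeries g s := by
  ext k
  simp [coeff_applySeries, add_mul, Finset.sum_add_distrib]

lemma applySeries_mul {s : PowerSeries R} (hs : constantCoeff (R := R) s = 0) (f g : PowerSeries R) :
    applySeries (f * g) s = applySeries f s * applySeries g s := by
  ext k
  rw [coeff_applySeries, PowerSeries.coeff_mul]
  have RHS : ∑ ab ∈ antidiagonal k,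
      coeff (R := R) ab.1 (applySeries f s) * coeff (R := R) ab.2 (applySeries g s)
      = ∑ a ∈ range (k+1), ∑ b ∈ range (k+1),
          coeff (R := R) a f * coeff (R := R) b g * coeff (R := R) k (s ^ (a + b)) := by
    have step1 : ∀ ab ∈ antidiagonal k,
        coeff (R := R) ab.1 (applySeries f s) * coeff (R := R) ab.2 (applySeries g s)
        = ∑ a ∈ range (k+1), ∑ b ∈ range (k+1),
            coeff (R := R) a f * coeff (R := R) b g * (coeff (R := R) ab.1 (s^a) * coeff (R := R) ab.2 (s^b)) := by
      intro ab hab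
      have h1 : ab.1 < k + 1 := by
        have := Finset.HasAntidiagonal.mem_antidiagonal.mp hab; omega
      have h2 : ab.2 < k + 1 := by
        have := Finset.HasAntidiagonal.mem_antidiagonal.mp hab; omega
      rw [coeff_applySeries_ext f hs h1, coeff_applySeries_ext g hs h2, Finset.sum_mul_sum]
      apply Finset.sum_congr rfl; intro a _; apply Finset.sum_congr rfl; intro b _
      ring
    rw [Finset.sum_congr rfl step1, Finset.sum_comm]
    apply Finset.sum_congr rfl; intro a _
    rw [Finset.sum_comm]
    apply Finset.sum_congr rfl; intro b _
    rw [← Finset.mul_sum, ← PowerSeries.coeff_mul, ← pow_add]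
  rw [RHS]
  have step2 : ∀ n ∈ range (k+1), coeff (R := R) n (f * g) * coeff (R := R) k (s ^ n)
      = ∑ ab ∈ antidiagonal n, coeff (R := R) ab.1 f * coeff (R := R) ab.2 g * coeff (R := R) k (s ^ (ab.1 + ab.2)) := by
    intro n hn
    rw [PowerSeries.coeff_mul, Finset.sum_mul]
    apply Finset.sum_congr rfl; intro ab hab
    rw [Finset.HasAntidiagonal.mem_antidiagonal.mp hab]
  rw [Finset.sum_congr rfl step2, ← Finset.sum_biUnion]
  · rw [show ((range (k+1)).biUnion (fun n => antidiagonal n) : Finset (ℕ × ℕ))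
        = (range (k+1) ×ˢ range (k+1)).filter (fun ab => ab.1 + ab.2 ≤ k) by
      ext ab
      simp only [Finset.mem_biUnion, Finset.mem_range, Finset.HasAntidiagonal.mem_antidiagonal,
        Finset.mem_filter, Finset.mem_product]
      constructor
      · rintro ⟨n, hn, rfl⟩; omega
      · rintro ⟨⟨_, _⟩, h⟩; exact ⟨ab.1 + ab.2, by omega, rfl⟩]
    rw [Finset.sum_filter_of_ne ?h0]
    · rw [Finset.sum_product]
    case h0 =>
      intro ab hab hne
      by_contra hgt
      exact hne (by rw [coeff_pow_of_lt hs (by omega), mul_zero])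
  · intro a _ b _ hab
    simp only [Finset.disjoint_left]
    intro x hx hx'
    rw [Finset.HasAntidiagonal.mem_antidiagonal] at hx hx'
    exact hab (by rw [← hx, hx'])

lemma applySeries_pow {s : PowerSeries R} (hs : constantCoeff (R := R) s = 0) (f : PowerSeries R)
    (n : ℕ) : applySeries (f ^ n) s = (applySeries f s) ^ n := by
  induction n with
  | zero => simpa using applySeries_one s
  | succ n ih => rw [pow_succ, applySeries_mul hs, ih, pow_succ]

lemma coeff_one_add_X_pow (a k : ℕ) :
    coeff (R := R) k ((1 + X) ^ a) = (a.choose k : R) := by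
  rw [add_comm (1 : PowerSeries R) X, add_pow]
  rw [map_sum]
  have h : ∀ i ∈ range (a + 1),
      coeff (R := R) k ((X : PowerSeries R) ^ i * 1 ^ (a - i) * (a.choose i : PowerSeries R))
        = if k = i then (a.choose i : R) else 0 := by
    intro i _
    rw [one_pow, mul_one, show ((a.choose i : ℕ) : PowerSeries R) = C (R := R) (a.choose i : R) by
      simp, PowerSeries.coeff_mul_C, PowerSeries.coeff_X_pow, ite_mul, one_mul, zero_mul]
  rw [Finset.sum_congr rfl h, Finset.sum_ite_eq (range (a+1)) k (fun i => (a.choose i : R))]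
  by_cases hk : k ∈ range (a+1)
  · rw [if_pos hk]
  · rw [if_neg hk]
    simp only [Finset.mem_range, not_lt] at hk
    rw [Nat.choose_eq_zero_of_lt (by omega), Nat.cast_zero]

lemma applySeries_one_add_X_pow {s : PowerSeries R} (hs : constantCoeff (R := R) s = 0) (a : ℕ) :
    applySeries ((1 + X) ^ a) s = (1 + s) ^ a := by
  rw [applySeries_pow hs, applySeries_add, applySeries_one, applySeries_X_left hs]

/-- The key coefficient relation for an endomorphism of the 1-units. -/
lemma endo_rel {f : PowerSeries R} (hf : IsOneUnitEndo f) (j : ℕ) :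
    ((j + 1 : ℕ) : R) * coeff (R := R) (j + 1) f + (j : R) * coeff (R := R) j f
      = coeff (R := R) 1 f * coeff (R := R) j f := by
  set K := j + 2 with hK
  set m := j + K + 1 with hm
  have hu : constantCoeff (R := R) (1 + X) = 1 := by simp
  have hv : constantCoeff (R := R) (1 + X ^ (K + 1)) = 1 := by simp
  have H := hf.2 (1 + X) (1 + X ^ (K + 1)) hu hv
  have e1 : (1 + X : PowerSeries R) - 1 = X := by ring
  have e2 : (1 + X ^ (K + 1) : PowerSeries R) - 1 = X ^ (K + 1) := by ring
  have es : (1 + X : PowerSeries R) * (1 + X ^ (K + 1)) - 1 = X * (1 + X ^ K * (1 + X)) := by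
    ring
  rw [e1, e2, es, applySeries_X_right] at H
  set s : PowerSeries R := X * (1 + X ^ K * (1 + X)) with hsdef
  have hs0 : constantCoeff (R := R) s = 0 := by simp [hsdef]
  -- coefficients of powers of s
  have hsn : ∀ n : ℕ, n ≤ m → coeff (R := R) m (s ^ n)
      = ∑ i ∈ range (n + 1),
          (if K * i ≤ m - n then ((i.choose (m - n - K * i)) : R) else 0)
            * (n.choose i : R) := by
    intro n hn
    have hsplit : s ^ n = X ^ n * (1 + X ^ K * (1 + X)) ^ n := mul_pow _ _ n
    have hxp := PowerSeries.coeff_X_pow_mul ((1 + X ^ K * (1 + X) : PowerSeries R) ^ n) n (m - n)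
    rw [show m - n + n = m by omega] at hxp
    rw [hsplit, hxp]
    rw [show (1 + X ^ K * (1 + X) : PowerSeries R) = X ^ K * (1 + X) + 1 by ring, add_pow,
      map_sum]
    apply Finset.sum_congr rfl
    intro i _
    rw [one_pow, mul_one, show (((n.choose i : ℕ)) : PowerSeries R) = C (R := R) (n.choose i : R) by
      simp, PowerSeries.coeff_mul_C, mul_pow, ← pow_mul, PowerSeries.coeff_X_pow_mul',
      coeff_one_add_X_pow]
  -- LHS coefficient
  have hL : coeff (R := R) m (applySeries f s)
      = coeff (R := R) m f + ((j + 1 : ℕ) : R) * coeff (R := R) (j + 1) f + (j : R) * coeff (R := R) j f := by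
    rw [coeff_applySeries]
    have hpt : ∀ n ∈ range (m + 1),
        coeff (R := R) n f * coeff (R := R) m (s ^ n)
          = (if n = m then coeff (R := R) m f else 0)
            + (if n = j + 1 then ((j + 1 : ℕ) : R) * coeff (R := R) (j + 1) f else 0)
            + (if n = j then (j : R) * coeff (R := R) j f else 0) := by
      intro n hn
      rw [Finset.mem_range] at hn
      rw [hsn n (by omega)]
      by_cases h1 : n = m
      · rw [h1, if_pos rfl, if_neg (by omega), if_neg (by omega), add_zero, add_zero]
        rw [Finset.sum_eq_single 0]
        · simp
        · intro i _ hi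
          have : ¬ (K * i ≤ m - m) := by
            have h2 : K * 1 ≤ K * i := Nat.mul_le_mul_left K (by omega)
            omega
          rw [if_neg this, zero_mul]
        · intro h; exact absurd (by simp : (0:ℕ) ∈ range (m+1)) h
      · by_cases h2 : n = j + 1
        · rw [h2, if_neg (by omega), if_pos rfl, if_neg (by omega), zero_add, add_zero]
          have hd : m - (j + 1) = K := by omega
          rw [hd, Finset.sum_eq_single 1]
          · have : K * 1 ≤ K := by omega
            rw [if_pos this, show K - K * 1 = 0 by omega]
            simp [Nat.choose_one_right, mul_comm]
          · intro i _ hi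
            rcases Nat.lt_or_ge i 1 with hlt | hge
            · have : i = 0 := by omega
              subst this
              rw [if_pos (by omega), show K - K * 0 = K by omega,
                Nat.choose_eq_zero_of_lt (by omega)]
              simp
            · have hge2 : 2 ≤ i := by omega
              have h2 : K * 2 ≤ K * i := Nat.mul_le_mul_left K hge2
              rw [if_neg (by omega), zero_mul]
          · intro h; exact absurd (by simp only [Finset.mem_range]; omega :
              (1:ℕ) ∈ range (j + 1 + 1)) h
        · by_cases h3 : n = j
          · rw [h3, if_neg (by omega), if_neg (by omega), if_pos rfl, zero_add, zero_add]
            have hd : m - j = K + 1 := by omega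
            rw [hd, Finset.sum_eq_single 1]
            · have : K * 1 ≤ K + 1 := by omega
              rw [if_pos this, show K + 1 - K * 1 = 1 by omega]
              simp [Nat.choose_one_right, mul_comm]
            · intro i _ hi
              rcases Nat.lt_or_ge i 1 with hlt | hge
              · have : i = 0 := by omega
                subst this
                rw [if_pos (by omega), show K + 1 - K * 0 = K + 1 by omega,
                  Nat.choose_eq_zero_of_lt (by omega)]
                simp
              · have hge2 : 2 ≤ i := by omega
                have h2 : K * 2 ≤ K * i := Nat.mul_le_mul_left K hge2
                rw [if_neg (by omega), zero_mul]
            · intro h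
              have : j = 0 := by
                simp only [Finset.mem_range] at h; omega
              subst this
              simp
          · rw [if_neg h1, if_neg h2, if_neg h3, add_zero, add_zero]
            rw [Finset.sum_eq_zero, mul_zero]
            intro i hi
            rcases Nat.lt_or_ge i 2 with hlt | hge
            · rcases Nat.lt_or_ge i 1 with hlt1 | hge1
              · have : i = 0 := by omega
                subst this
                rw [if_pos (by omega), show m - n - K * 0 = m - n by omega,
                  Nat.choose_eq_zero_of_lt (by omega)]
                simp
              · have : i = 1 := by omega
                subst this
                by_cases hc : K * 1 ≤ m - n
                · rw [if_pos hc, Nat.choose_eq_zero_of_lt (by omega)]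
                  simp
                · rw [if_neg hc, zero_mul]
            · have h2 : K * 2 ≤ K * i := Nat.mul_le_mul_left K hge
              rw [if_neg (by omega), zero_mul]
    rw [Finset.sum_congr rfl hpt, Finset.sum_add_distrib, Finset.sum_add_distrib,
      Finset.sum_ite_eq' (range (m+1)) m, Finset.sum_ite_eq' (range (m+1)) (j+1),
      Finset.sum_ite_eq' (range (m+1)) j,
      if_pos (by simp only [Finset.mem_range]; omega : m ∈ range (m+1)),
      if_pos (by simp only [Finset.mem_range]; omega : j + 1 ∈ range (m+1)),
      if_pos (by simp only [Finset.mem_range]; omega : j ∈ range (m+1))]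
  -- RHS coefficient
  have hB : ∀ i : ℕ, coeff (R := R) i (applySeries f (X ^ (K + 1)))
      = if (K + 1) ∣ i then coeff (R := R) (i / (K + 1)) f else 0 := by
    intro i
    rw [coeff_applySeries]
    have hterm : ∀ n ∈ range (i + 1), coeff (R := R) n f * coeff (R := R) i ((X ^ (K+1)) ^ n)
        = coeff (R := R) n f * (if i = (K + 1) * n then 1 else 0) := by
      intro n _
      rw [← pow_mul, PowerSeries.coeff_X_pow]
    rw [Finset.sum_congr rfl hterm]
    by_cases hdvd : (K + 1) ∣ i
    · obtain ⟨c, rfl⟩ := hdvd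
      rw [if_pos ⟨c, rfl⟩, Nat.mul_div_cancel_left c (by omega)]
      rw [Finset.sum_eq_single c]
      · rw [if_pos rfl, mul_one]
      · intro n _ hn
        rw [if_neg (fun h => hn (by
          exact (Nat.eq_of_mul_eq_mul_left (by omega) h.symm))), mul_zero]
      · intro h
        exfalso
        apply h
        simp only [Finset.mem_range]
        have := Nat.le_mul_of_pos_left c (show 0 < K + 1 by omega)
        omega
    · rw [if_neg hdvd, Finset.sum_eq_zero]
      intro n _
      rw [if_neg (fun h => hdvd ⟨n, h⟩), mul_zero]
  have hR : coeff (R := R) m (f * applySeries f (X ^ (K + 1)))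
      = coeff (R := R) m f * coeff (R := R) 0 f + coeff (R := R) j f * coeff (R := R) 1 f := by
    rw [PowerSeries.coeff_mul, Finset.Nat.sum_antidiagonal_eq_sum_range_succ_mk]
    have hpt : ∀ a ∈ range (m + 1),
        coeff (R := R) a f * coeff (R := R) (m - a) (applySeries f (X ^ (K + 1)))
          = (if a = m then coeff (R := R) m f * coeff (R := R) 0 f else 0)
            + (if a = j then coeff (R := R) j f * coeff (R := R) 1 f else 0) := by
      intro a ha
      rw [Finset.mem_range] at ha
      rw [hB (m - a)]
      by_cases h1 : a = m
      · rw [h1, show m - m = 0 by omega, if_pos (dvd_zero (K+1)), Nat.zero_div,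
          if_pos rfl, if_neg (by omega), add_zero]
      · by_cases h2 : a = j
        · rw [h2, show m - j = K + 1 by omega, if_pos (dvd_refl (K+1)),
          Nat.div_self (by omega), if_neg (by omega), if_pos rfl, zero_add]
        · rw [if_neg h1, if_neg h2, add_zero]
          by_cases hdvd : (K + 1) ∣ (m - a)
          · exfalso
            obtain ⟨c, hc⟩ := hdvd
            rcases Nat.lt_or_ge c 2 with hlt | hge
            · interval_cases c <;> omega
            · have h2 : (K + 1) * 2 ≤ (K + 1) * c := Nat.mul_le_mul_left (K+1) hge
              omega
          · rw [if_neg hdvd, mul_zero]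
    rw [Finset.sum_congr rfl hpt, Finset.sum_add_distrib,
      Finset.sum_ite_eq' (range (m+1)) m, Finset.sum_ite_eq' (range (m+1)) j,
      if_pos (by simp only [Finset.mem_range]; omega : m ∈ range (m+1)),
      if_pos (by simp only [Finset.mem_range]; omega : j ∈ range (m+1))]
  have hc0 : coeff (R := R) 0 f = 1 := by
    rw [PowerSeries.coeff_zero_eq_constantCoeff]; exact hf.1
  have Hm := congrArg (coeff (R := R) m) H
  rw [hL, hR, hc0, mul_one] at Hm
  have := add_left_cancel (a := coeff (R := R) m f)
    (by linear_combination Hm : coeff (R := R) m f + (((j + 1 : ℕ) : R) * coeff (R := R) (j + 1) f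
      + (j : R) * coeff (R := R) j f) = coeff (R := R) m f + coeff (R := R) j f * coeff (R := R) 1 f)
  linear_combination this

section Prime

variable {p : ℕ} [Fact p.Prime]

lemma vanish {c : ℕ → ZMod p}
    (hrel : ∀ j : ℕ, ((j + 1 : ℕ) : ZMod p) * c (j + 1) + (j : ZMod p) * c j = 0) :
    ∀ m : ℕ, ¬ (p ∣ m) → c m = 0 := by
  intro m
  induction m using Nat.strong_induction_on with
  | _ m ih =>
    intro hm
    match m, hm with
    | 0, hm => exact absurd (dvd_zero p) hm
    | (j+1), hm =>
      have h := hrel j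
      have hm0 : ((j + 1 : ℕ) : ZMod p) ≠ 0 := fun h0 =>
        hm ((ZMod.natCast_eq_zero_iff _ p).mp h0)
      by_cases hj : p ∣ j
      · have hj0 : (j : ZMod p) = 0 := (ZMod.natCast_eq_zero_iff j p).mpr hj
        rw [hj0, zero_mul, add_zero] at h
        exact (mul_eq_zero.mp h).resolve_left hm0
      · have hj0 : c j = 0 := ih j (by omega) hj
        rw [hj0, mul_zero, add_zero] at h
        exact (mul_eq_zero.mp h).resolve_left hm0

lemma coeff_pow_p (t : PowerSeries (ZMod p)) (k : ℕ) :
    coeff (R := ZMod p) k (t ^ p) = if p ∣ k then coeff (R := ZMod p) (k / p) t else 0 := by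
  have hp : 0 < p := (Fact.out : p.Prime).pos
  set q : Polynomial (ZMod p) := trunc (k + 1) t with hq
  have hdvd : (X : PowerSeries (ZMod p)) ^ (k + 1) ∣ t - (q : PowerSeries (ZMod p)) := by
    rw [PowerSeries.X_pow_dvd_iff]
    intro d hd
    rw [map_sub, Polynomial.coeff_coe, hq, coeff_trunc, if_pos hd, sub_self]
  have hdvd2 : (X : PowerSeries (ZMod p)) ^ (k + 1)
      ∣ t ^ p - ((q : PowerSeries (ZMod p))) ^ p :=
    dvd_trans hdvd (sub_dvd_pow_sub_pow _ _ p)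
  have h1 : coeff (R := ZMod p) k (t ^ p) = coeff (R := ZMod p) k ((q : PowerSeries (ZMod p)) ^ p) := by
    have h2 := PowerSeries.X_pow_dvd_iff.mp hdvd2 k (by omega)
    rw [map_sub, sub_eq_zero] at h2
    exact h2
  have hqp : q ^ p = Polynomial.expand (ZMod p) p q := by
    rw [← Polynomial.map_frobenius_expand, ZMod.frobenius_zmod, Polynomial.map_id]
  rw [h1, ← Polynomial.coe_pow, Polynomial.coeff_coe, hqp, Polynomial.coeff_expand hp]
  by_cases hk : p ∣ k
  · rw [if_pos hk, if_pos hk, hq, coeff_trunc,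
      if_pos (Nat.lt_succ_of_le (Nat.div_le_self k p))]
  · rw [if_neg hk, if_neg hk]

lemma eq_pow_p_root {g : PowerSeries (ZMod p)} (hg : ∀ m, ¬ p ∣ m → coeff (R := ZMod p) m g = 0) :
    g = (PowerSeries.mk fun n => coeff (R := ZMod p) (p * n) g) ^ p := by
  ext k
  rw [coeff_pow_p]
  by_cases hk : p ∣ k
  · obtain ⟨c, rfl⟩ := hk
    rw [if_pos (Dvd.intro c rfl), Nat.mul_div_cancel_left c (Fact.out : p.Prime).pos, coeff_mk]
  · rw [if_neg hk]
    exact hg k hk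

lemma pow_p_injective : Function.Injective (fun t : PowerSeries (ZMod p) => t ^ p) := by
  haveI : CharP (PowerSeries (ZMod p)) p :=
    charP_of_injective_ringHom (PowerSeries.C_injective) p
  intro a b hab
  have h : (a - b) ^ p = 0 := by
    rw [sub_pow_char]
    simpa [sub_eq_zero] using hab
  have h2 := pow_eq_zero_iff (n := p) (Fact.out : p.Prime).ne_zero |>.mp h
  exact sub_eq_zero.mp h2

end Prime

end OneUnitAux

/-- If an endomorphism `f` of the 1-units is neither rational in `x` nor a `p`-th power in
`F_p[[x]]`, then its linear coefficient `a₁` is nonzero, and the endomorphism `g` defined by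
`f(1+x) = (1+x)^{a₁} g(1+x)` has zero linear coefficient, hence is the `p`-th power of an
endomorphism. -/
theorem not_rational_not_pth_power {p : ℕ} [Fact p.Prime]
    (f : PowerSeries (ZMod p)) (hf : IsOneUnitEndo f)
    (hrat : ¬ IsRationalPS f) (hpow : ¬ ∃ g : PowerSeries (ZMod p), f = g ^ p) :
    coeff (R := ZMod p) 1 f ≠ 0 ∧
      ∃ g : PowerSeries (ZMod p), IsOneUnitEndo g ∧
        f = (1 + X) ^ (ZMod.val (coeff (R := ZMod p) 1 f)) * g ∧
        coeff (R := ZMod p) 1 g = 0 ∧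
        ∃ h : PowerSeries (ZMod p), IsOneUnitEndo h ∧ g = h ^ p := by
  clear hrat
  -- Part 1 : the linear coefficient is nonzero
  have ha1 : coeff (R := ZMod p) 1 f ≠ 0 := by
    intro h0
    apply hpow
    have hrel0 : ∀ j : ℕ, ((j + 1 : ℕ) : ZMod p) * coeff (R := ZMod p) (j + 1) f
        + (j : ZMod p) * coeff (R := ZMod p) j f = 0 := by
      intro j
      rw [OneUnitAux.endo_rel hf j, h0, zero_mul]
    exact ⟨_, OneUnitAux.eq_pow_p_root (OneUnitAux.vanish (c := fun n => coeff (R := ZMod p) n f) hrel0)⟩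
  refine ⟨ha1, ?_⟩
  set a : ℕ := ZMod.val (coeff (R := ZMod p) 1 f) with haa
  set e : PowerSeries (ZMod p) := (1 + X) ^ a with hee
  have hce : constantCoeff (R := ZMod p) e = 1 := by
    rw [hee, map_pow, map_add, constantCoeff_one, constantCoeff_X, add_zero, one_pow]
  have hg0 : ∀ u v : PowerSeries (ZMod p), constantCoeff (R := ZMod p) u = 1 →
      constantCoeff (R := ZMod p) v = 1 → constantCoeff (R := ZMod p) (u * v - 1) = 0 := by
    intro u v hu hv
    rw [map_sub, map_mul, hu, hv, constantCoeff_one, mul_one, sub_self]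
  have hone : ∀ u : PowerSeries (ZMod p), constantCoeff (R := ZMod p) u = 1 →
      constantCoeff (R := ZMod p) (u - 1) = 0 := by
    intro u hu
    rw [map_sub, hu, constantCoeff_one, sub_self]
  have hApe : ∀ u : PowerSeries (ZMod p), constantCoeff (R := ZMod p) u = 1 →
      applySeries e (u - 1) = u ^ a := by
    intro u hu
    rw [hee, OneUnitAux.applySeries_one_add_X_pow (hone u hu), add_sub_cancel]
  -- g
  set g : PowerSeries (ZMod p) := e⁻¹ * f with hgg
  have hmul : e * e⁻¹ = 1 := PowerSeries.mul_inv_cancel e (by rw [hce]; exact one_ne_zero)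
  have hfeg : f = e * g := by
    rw [hgg, ← mul_assoc, hmul, one_mul]
  have hcg : constantCoeff (R := ZMod p) g = 1 := by
    rw [hgg, map_mul, PowerSeries.constantCoeff_inv, hce, hf.1, inv_one, one_mul]
  -- multiplicativity of g
  have hgmul : ∀ u v : PowerSeries (ZMod p), constantCoeff (R := ZMod p) u = 1 →
      constantCoeff (R := ZMod p) v = 1 →
      applySeries g (u * v - 1) = applySeries g (u - 1) * applySeries g (v - 1) := by
    intro u v hu hv
    have huv : constantCoeff (R := ZMod p) (u * v) = 1 := by rw [map_mul, hu, hv, mul_one]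
    have h1 := hf.2 u v hu hv
    rw [hfeg, OneUnitAux.applySeries_mul (hg0 u v hu hv),
      OneUnitAux.applySeries_mul (hone u hu), OneUnitAux.applySeries_mul (hone v hv),
      hApe _ huv, hApe u hu, hApe v hv] at h1
    have hne : ((u * v) ^ a : PowerSeries (ZMod p)) ≠ 0 := fun h => by
      have := congrArg (constantCoeff (R := ZMod p)) h
      rw [map_pow, huv, one_pow, map_zero] at this
      exact one_ne_zero this
    apply mul_left_cancel₀ hne
    rw [h1, mul_pow]
    ring
  have hgend : IsOneUnitEndo g := ⟨hcg, hgmul⟩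
  -- linear coefficient of g is zero
  have hc1e : coeff (R := ZMod p) 1 e = coeff (R := ZMod p) 1 f := by
    rw [hee, OneUnitAux.coeff_one_add_X_pow, Nat.choose_one_right, haa,
      ZMod.natCast_zmod_val]
  have hc1g : coeff (R := ZMod p) 1 g = 0 := by
    have h1 : coeff (R := ZMod p) 1 f
        = coeff (R := ZMod p) 0 e * coeff (R := ZMod p) 1 g + coeff (R := ZMod p) 1 e * coeff (R := ZMod p) 0 g := by
      conv_lhs => rw [hfeg]
      rw [PowerSeries.coeff_mul, Finset.Nat.sum_antidiagonal_eq_sum_range_succ_mk,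
        Finset.sum_range_succ, Finset.sum_range_one]
    rw [hc1e, PowerSeries.coeff_zero_eq_constantCoeff_apply,
      PowerSeries.coeff_zero_eq_constantCoeff_apply, hce, hcg, one_mul, mul_one] at h1
    linear_combination -h1
  -- the p-th root of g
  have hrelg : ∀ j : ℕ, ((j + 1 : ℕ) : ZMod p) * coeff (R := ZMod p) (j + 1) g
      + (j : ZMod p) * coeff (R := ZMod p) j g = 0 := by
    intro j
    rw [OneUnitAux.endo_rel hgend j, hc1g, zero_mul]
  have hgv := OneUnitAux.vanish (c := fun n => coeff (R := ZMod p) n g) hrelg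
  set h : PowerSeries (ZMod p) := PowerSeries.mk fun n => coeff (R := ZMod p) (p * n) g with hhh
  have hgh : g = h ^ p := OneUnitAux.eq_pow_p_root hgv
  have hch : constantCoeff (R := ZMod p) h = 1 := by
    rw [hhh, ← PowerSeries.coeff_zero_eq_constantCoeff_apply, coeff_mk, mul_zero,
      PowerSeries.coeff_zero_eq_constantCoeff_apply, hcg]
  have hhend : IsOneUnitEndo h := by
    refine ⟨hch, fun u v hu hv => ?_⟩
    apply OneUnitAux.pow_p_injective
    show applySeries h (u * v - 1) ^ p = (applySeries h (u - 1) * applySeries h (v - 1)) ^ p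
    rw [mul_pow, ← OneUnitAux.applySeries_pow (hg0 u v hu hv),
      ← OneUnitAux.applySeries_pow (hone u hu), ← OneUnitAux.applySeries_pow (hone v hv), ← hgh]
    exact hgend.2 u v hu hv
  exact ⟨g, hgend, hfeg, hc1g, h, hhend, hgh⟩
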